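/- Let b ≥ 2, Λ = (b) (i.e., ρ = 1, λ = b), ℓ ≥ 1 and n ≥ 1. Then for all j with (b^ℓ-1)/(b-1) ≤ j ≤ b^ℓ - 1, Ω_{b,T}^{(b)}(n·b^ℓ + j; Z) = Ω_{b,T}^{(b)}(n; Z^{T^ℓ}) · Ω_{b,T}^{(b)}(j; Z), where Z = (z₁,...,z_b), T = (t₁,...,t_b), and Z^{T^ℓ} = (z₁^{t₁^ℓ},...,z_b^{t_b^ℓ}). -/

import Mathlib

open MvPolynomial

section Aux

variable (b : ℕ) (T : Fin b → ℕ)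

/-- The `j`-th factor of the generating product. -/
noncomputable def fctOmega (j : ℕ) : PowerSeries (MvPolynomial (Fin b) ℤ) :=
  1 + ∑ i : Fin b,
    PowerSeries.C (R := MvPolynomial (Fin b) ℤ)
        ((X i : MvPolynomial (Fin b) ℤ) ^ T i ^ j) *
      PowerSeries.X ^ ((i.1 + 1) * b ^ j)

lemma coeff_mul_fctOmega (Q : PowerSeries (MvPolynomial (Fin b) ℤ)) (jj c : ℕ) :
    PowerSeries.coeff c (Q * fctOmega b T jj) =
      PowerSeries.coeff c Q +
        ∑ i : Fin b, (if (i.1 + 1) * b ^ jj ≤ c then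
            (X i : MvPolynomial (Fin b) ℤ) ^ T i ^ jj *
              PowerSeries.coeff (c - (i.1 + 1) * b ^ jj) Q
          else 0) := by
  rw [fctOmega, mul_add, mul_one, map_add, Finset.mul_sum, map_sum]
  congr 1
  refine Finset.sum_congr rfl fun i _ => ?_
  rw [show Q * (PowerSeries.C (R := MvPolynomial (Fin b) ℤ)
        ((X i : MvPolynomial (Fin b) ℤ) ^ T i ^ jj) *
          PowerSeries.X ^ ((i.1 + 1) * b ^ jj))
      = PowerSeries.C (R := MvPolynomial (Fin b) ℤ)
          ((X i : MvPolynomial (Fin b) ℤ) ^ T i ^ jj) *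
        (Q * PowerSeries.X ^ ((i.1 + 1) * b ^ jj)) by ring,
    PowerSeries.coeff_C_mul, PowerSeries.coeff_mul_X_pow']
  split <;> simp

lemma coeff_prod_fctOmega_eq_zero (m : ℕ) :
    ∀ a : ℕ, (∑ j ∈ Finset.range m, b * b ^ j) < a →
    PowerSeries.coeff a (∏ j ∈ Finset.range m, fctOmega b T j) = 0 := by
  induction m with
  | zero =>
    intro a ha
    simp only [Finset.range_zero, Finset.sum_empty] at ha
    rw [Finset.range_zero, Finset.prod_empty, PowerSeries.coeff_one, if_neg (by omega)]
  | succ m ih =>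
    intro a ha
    rw [Finset.sum_range_succ] at ha
    rw [Finset.prod_range_succ, coeff_mul_fctOmega, ih a (by omega)]
    rw [zero_add]
    refine Finset.sum_eq_zero fun i _ => ?_
    have hie : (i.1 + 1) * b ^ m ≤ b * b ^ m :=
      Nat.mul_le_mul_right _ (by omega)
    by_cases hle : (i.1 + 1) * b ^ m ≤ a
    · rw [if_pos hle, ih _ (by omega), mul_zero]
    · rw [if_neg hle]

lemma coeff_prod_fctOmega_shift (hb : 0 < b) (l M : ℕ) :
    ∀ c : ℕ, PowerSeries.coeff c (∏ j ∈ Finset.range M, fctOmega b T (l + j)) =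
      if b ^ l ∣ c then
        aeval (fun v : Fin b => (X v : MvPolynomial (Fin b) ℤ) ^ T v ^ l)
          (PowerSeries.coeff (c / b ^ l) (∏ j ∈ Finset.range M, fctOmega b T j))
      else 0 := by
  have hbl : 0 < b ^ l := pow_pos hb l
  induction M with
  | zero =>
    intro c
    simp only [Finset.range_zero, Finset.prod_empty, PowerSeries.coeff_one]
    by_cases h : b ^ l ∣ c
    · obtain ⟨k, rfl⟩ := h
      rw [if_pos (Dvd.intro k rfl), Nat.mul_div_cancel_left _ hbl]
      by_cases hk : k = 0
      · simp [hk]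
      · rw [if_neg (Nat.mul_ne_zero hbl.ne' hk), if_neg hk, map_zero]
    · rw [if_neg h, if_neg (by rintro rfl; exact h (dvd_zero _))]
  | succ M ih =>
    intro c
    by_cases h : b ^ l ∣ c
    · obtain ⟨k, rfl⟩ := h
      rw [if_pos (Dvd.intro k rfl), Nat.mul_div_cancel_left _ hbl,
        Finset.prod_range_succ, Finset.prod_range_succ,
        coeff_mul_fctOmega, coeff_mul_fctOmega, map_add, map_sum]
      congr 1
      · rw [ih, if_pos (Dvd.intro k rfl), Nat.mul_div_cancel_left _ hbl]
      refine Finset.sum_congr rfl fun i _ => ?_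
      have he : (i.1 + 1) * b ^ (l + M) = b ^ l * ((i.1 + 1) * b ^ M) := by ring
      by_cases hle : (i.1 + 1) * b ^ M ≤ k
      · rw [if_pos (by rw [he]; exact Nat.mul_le_mul_left _ hle), if_pos hle,
          he, ← Nat.mul_sub, ih, if_pos (Dvd.intro _ rfl),
          Nat.mul_div_cancel_left _ hbl, map_mul]
        congr 1
        rw [map_pow, aeval_X, ← pow_mul, ← pow_add]
      · have hnotle : ¬ (i.1 + 1) * b ^ (l + M) ≤ b ^ l * k := by
          rw [he]
          intro hcon
          exact hle (Nat.le_of_mul_le_mul_left hcon hbl)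
        rw [if_neg hnotle, if_neg hle, map_zero]
    · rw [if_neg h, Finset.prod_range_succ, coeff_mul_fctOmega, ih, if_neg h, zero_add]
      refine Finset.sum_eq_zero fun i _ => ?_
      by_cases hle : (i.1 + 1) * b ^ (l + M) ≤ c
      · rw [if_pos hle, ih, if_neg ?_, mul_zero]
        intro hd
        apply h
        have hde : b ^ l ∣ (i.1 + 1) * b ^ (l + M) := ⟨(i.1 + 1) * b ^ M, by ring⟩
        have hsum : c = (c - (i.1 + 1) * b ^ (l + M)) + (i.1 + 1) * b ^ (l + M) :=
          (Nat.sub_add_cancel hle).symm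
        rw [hsum]
        exact dvd_add hd hde
      · rw [if_neg hle]

lemma geomAuxOmega (hb : 1 ≤ b) : ∀ l : ℕ,
    (b - 1) * (∑ i ∈ Finset.range l, b ^ i) + 1 = b ^ l := by
  obtain ⟨b', rfl⟩ : ∃ b', b = b' + 1 := ⟨b - 1, by omega⟩
  intro l
  simp only [Nat.add_sub_cancel]
  induction l with
  | zero => simp
  | succ m ih =>
    rw [Finset.sum_range_succ, Nat.mul_add, pow_succ]
    have h2 : (b' + 1) ^ m * (b' + 1) = b' * (b' + 1) ^ m + (b' + 1) ^ m := by ring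
    omega

end Aux

theorem Omega_single_color_factorization (b : ℕ) (hb : 2 ≤ b)
    (T : Fin b → ℕ) (hT : ∀ i, 1 ≤ T i)
    (Om : ℕ → MvPolynomial (Fin b) ℤ)
    (hOm : ∀ n N : ℕ, n < b ^ N →
      PowerSeries.coeff (R := MvPolynomial (Fin b) ℤ) n
        (∏ j ∈ Finset.range N,
          (1 + ∑ i : Fin b,
            PowerSeries.C (R := MvPolynomial (Fin b) ℤ)
                ((X i : MvPolynomial (Fin b) ℤ) ^ T i ^ j) *
              PowerSeries.X ^ ((i.1 + 1) * b ^ j))) = Om n)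
    (l n : ℕ) (hl : 1 ≤ l) (hn : 1 ≤ n) :
    ∀ j : ℕ, (b ^ l - 1) / (b - 1) ≤ j → j ≤ b ^ l - 1 →
      Om (n * b ^ l + j) =
        aeval (fun v : Fin b => (X v : MvPolynomial (Fin b) ℤ) ^ T v ^ l) (Om n) *
          Om j := by
  intro j hj1 hj2
  have hOm' : ∀ n N : ℕ, n < b ^ N →
      PowerSeries.coeff (R := MvPolynomial (Fin b) ℤ) n
        (∏ jj ∈ Finset.range N, fctOmega b T jj) = Om n := hOm
  have hb1 : 1 < b := by omega
  have hbl : 0 < b ^ l := pow_pos (by omega) l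
  set S := ∑ i ∈ Finset.range l, b ^ i with hSdef
  have hgeom : (b - 1) * S + 1 = b ^ l := geomAuxOmega b (by omega) l
  have hS : (b ^ l - 1) / (b - 1) = S := by
    have h1 : b ^ l - 1 = (b - 1) * S := by omega
    rw [h1]
    exact Nat.mul_div_cancel_left _ (by omega)
  rw [hS] at hj1
  have hjlt : j < b ^ l := by omega
  have hnM : n < b ^ n := Nat.lt_pow_self hb1
  have hm : n * b ^ l + j < b ^ (l + n) := by
    have h1 : (n + 1) * b ^ l = n * b ^ l + b ^ l := by ring
    have h2 : (n + 1) * b ^ l ≤ b ^ n * b ^ l :=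
      Nat.mul_le_mul_right _ hnM
    have h3 : b ^ (l + n) = b ^ n * b ^ l := by rw [pow_add]; ring
    omega
  rw [← hOm' _ _ hm, ← hOm' n n hnM, ← hOm' j l hjlt,
    Finset.prod_range_add, PowerSeries.coeff_mul]
  rw [Finset.sum_eq_single ((j, n * b ^ l) : ℕ × ℕ)]
  · rw [coeff_prod_fctOmega_shift b T (by omega) l n,
      if_pos (Dvd.intro_left n rfl), Nat.mul_div_cancel _ hbl, mul_comm]
  · rintro ⟨a, c⟩ hp hne
    have hac : a + c = n * b ^ l + j := Finset.HasAntidiagonal.mem_antidiagonal.mp hp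
    by_cases hc : b ^ l ∣ c
    · obtain ⟨k, rfl⟩ := hc
      have hcomm : b ^ l * k = k * b ^ l := mul_comm _ _
      rcases lt_trichotomy k n with hk | rfl | hk
      · have hkn : b ^ l * k + b ^ l ≤ b ^ l * n := by
          have h1 : b ^ l * (k + 1) ≤ b ^ l * n := Nat.mul_le_mul_left _ (by omega)
          have h2 : b ^ l * (k + 1) = b ^ l * k + b ^ l := by ring
          omega
        have hcomm2 : b ^ l * n = n * b ^ l := mul_comm _ _
        have ha : b ^ l + j ≤ a := by omega
        have hbS : ∑ jj ∈ Finset.range l, b * b ^ jj = b * S := by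
          rw [hSdef, Finset.mul_sum]
        have hSle : S ≤ b * S := Nat.le_mul_of_pos_left _ (by omega)
        have hsub : (b - 1) * S + S = b * S := by
          have : (b - 1) * S = b * S - S := by rw [Nat.sub_mul, one_mul]
          omega
        rw [coeff_prod_fctOmega_eq_zero b T l a (by omega), zero_mul]
      · exfalso
        apply hne
        have haj : a = j := by omega
        rw [haj, hcomm]
      · exfalso
        have h1 : b ^ l * (n + 1) ≤ b ^ l * k := Nat.mul_le_mul_left _ (by omega)
        have h2 : b ^ l * (n + 1) = b ^ l * n + b ^ l := by ring
        have hcomm2 : b ^ l * n = n * b ^ l := mul_comm _ _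
        omega
    · rw [coeff_prod_fctOmega_shift b T (by omega) l n, if_neg hc, mul_zero]
  · intro hnm
    exact absurd (Finset.HasAntidiagonal.mem_antidiagonal.mpr (by omega)) hnm
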